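/- (Bernoulli law ⇔ Gauss equation) With the fluid variables defined by h₁₁/√(det g) = ρv² + p, h₁₂/√(det g) = −ρuv, h₂₂/√(det g) = ρu² + p, and the Chaplygin-gas law p = −ρ⁻¹, the Gauss equation det h / det g = K is equivalent to ρ = 1/√(q² + K) where q² = u² + v², provided q² + K > 0 and ρ > 0. -/

import Mathlib

/-- **Bernoulli law ⇔ Gauss equation.**
With the fluid variables defined by `h₁₁/√(det g) = ρv² + p`, `h₁₂/√(det g) = −ρuv`,
`h₂₂/√(det g) = ρu² + p`, and the Chaplygin-gas law `p = −ρ⁻¹`, the Gauss equation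
`det h / det g = K` is equivalent to `ρ = 1/√(q² + K)` where `q² = u² + v²`,
provided `q² + K > 0` and `ρ > 0`. -/
theorem stmt_12 (h11 h12 h22 detg ρ u v p K : ℝ)
    (hdetg : 0 < detg) (hρ : 0 < ρ) (hqK : 0 < u ^ 2 + v ^ 2 + K)
    (hp : p = -ρ⁻¹)
    (H11 : h11 / Real.sqrt detg = ρ * v ^ 2 + p)
    (H12 : h12 / Real.sqrt detg = -(ρ * u * v))
    (H22 : h22 / Real.sqrt detg = ρ * u ^ 2 + p) :
    (h11 * h22 - h12 ^ 2) / detg = K ↔ ρ = 1 / Real.sqrt (u ^ 2 + v ^ 2 + K) := by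
  have hs : (0:ℝ) < Real.sqrt detg := Real.sqrt_pos.2 hdetg
  have hsq : Real.sqrt detg ^ 2 = detg := Real.sq_sqrt hdetg.le
  have key : (h11 * h22 - h12 ^ 2) / detg
      = (h11 / Real.sqrt detg) * (h22 / Real.sqrt detg) - (h12 / Real.sqrt detg) ^ 2 := by
    rw [← hsq]; field_simp; rw [Real.sqrt_sq hs.le]
  rw [key, H11, H12, H22, hp]
  have hρ' : ρ ≠ 0 := hρ.ne'
  have hval : (ρ * v ^ 2 + -ρ⁻¹) * (ρ * u ^ 2 + -ρ⁻¹) - (-(ρ * u * v)) ^ 2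
      = ρ⁻¹ ^ 2 - (u ^ 2 + v ^ 2) := by field_simp; ring
  rw [hval]
  constructor
  · intro h
    have h2 : ρ⁻¹ ^ 2 = u ^ 2 + v ^ 2 + K := by linarith
    have h3 : ρ ^ 2 * (u ^ 2 + v ^ 2 + K) = 1 := by
      field_simp at h2; nlinarith [h2]
    have hs0 : (0:ℝ) < Real.sqrt (u ^ 2 + v ^ 2 + K) := Real.sqrt_pos.2 hqK
    have hsk : Real.sqrt (u ^ 2 + v ^ 2 + K) ^ 2 = u ^ 2 + v ^ 2 + K := Real.sq_sqrt hqK.le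
    rw [eq_div_iff hs0.ne']
    nlinarith [hsk, h3, mul_pos hρ hs0, sq_nonneg (ρ * Real.sqrt (u ^ 2 + v ^ 2 + K) - 1)]
  · intro h
    have hsk : Real.sqrt (u ^ 2 + v ^ 2 + K) ^ 2 = u ^ 2 + v ^ 2 + K := Real.sq_sqrt hqK.le
    have hsk0 : Real.sqrt (u ^ 2 + v ^ 2 + K) ≠ 0 := by positivity
    rw [h]
    field_simp
    rw [hsk]; ring
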